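/- Let d ≥ 2 be an integer and let α, β be irrational real numbers. The sequence c_n = e^{2πi (n^d α + n^{d-1} β)} is weakly oscillating of order d but is not oscillating of order d. In particular, for every d ≥ 2 there exist weakly oscillating sequences of order d which are not oscillating of order d. -/

import Mathlib

open Filter Finset

/-- A sequence `(c n)` of complex numbers is oscillating of order `d`. -/
def OscillatingOfOrder (c : ℕ → ℂ) (d : ℕ) : Prop :=
  ∀ P : Polynomial ℝ, P.natDegree ≤ d →
    Tendsto (fun N : ℕ =>
        (N : ℂ)⁻¹ * ∑ n ∈ Finset.range N,
          c n * Complex.exp (2 * Real.pi * Complex.I * (P.eval (n : ℝ))))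
      atTop (nhds 0)

/-- A sequence `(c n)` of complex numbers is weakly oscillating of order `d`. -/
def WeaklyOscillatingOfOrder (c : ℕ → ℂ) (d : ℕ) : Prop :=
  ∀ k : ℕ, k ≤ d → ∀ t : ℝ, 0 ≤ t → t < 1 →
    Tendsto (fun N : ℕ =>
        (N : ℂ)⁻¹ * ∑ n ∈ Finset.range N,
          c n * Complex.exp (2 * Real.pi * Complex.I * ((n : ℝ) ^ k * t)))
      atTop (nhds 0)

section WeylMachinery

open Complex

noncomputable def ee (x : ℝ) : ℂ := Complex.exp (2 * Real.pi * Complex.I * x)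

lemma ee_add (x y : ℝ) : ee (x + y) = ee x * ee y := by
  simp [ee, ← Complex.exp_add]; ring_nf

lemma norm_ee (x : ℝ) : ‖ee x‖ = 1 := by
  simp [ee, Complex.norm_exp]

lemma conj_ee (x : ℝ) : (starRingEnd ℂ) (ee x) = ee (-x) := by
  rw [ee, ee, ← Complex.exp_conj]
  push_cast
  rw [map_mul, map_mul, map_mul, map_ofNat]
  simp [Complex.conj_I, Complex.conj_ofReal]

lemma ee_int (k : ℤ) : ee (k : ℝ) = 1 := by
  rw [ee]
  rw [show 2 * (Real.pi:ℂ) * Complex.I * ((k:ℝ):ℂ) = (k:ℤ) * (2 * Real.pi * Complex.I) by push_cast; ring]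
  exact Complex.exp_int_mul_two_pi_mul_I k

lemma ee_nat_mul (a : ℝ) (n : ℕ) : ee (a * n) = ee a ^ n := by
  rw [ee, ee, ← Complex.exp_nat_mul]
  congr 1
  push_cast
  ring

lemma norm_sum_le_card (f : ℕ → ℂ) (hf : ∀ n, ‖f n‖ ≤ 1) (s : Finset ℕ) :
    ‖∑ n ∈ s, f n‖ ≤ s.card := by
  calc ‖∑ n ∈ s, f n‖ ≤ ∑ n ∈ s, ‖f n‖ := norm_sum_le _ _
    _ ≤ ∑ _n ∈ s, 1 := Finset.sum_le_sum fun i _ => hf i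
    _ = s.card := by simp

lemma sum_shift (f : ℕ → ℂ) (h N : ℕ) :
    ∑ n ∈ range N, f (n + h) = (∑ n ∈ range (h + N), f n) - ∑ n ∈ range h, f n := by
  rw [Finset.sum_range_add, add_sub_cancel_left]
  exact Finset.sum_congr rfl fun i _ => by rw [add_comm]

lemma shifted_sum_bound (f : ℕ → ℂ) (hf : ∀ n, ‖f n‖ ≤ 1) (h N : ℕ) :
    ‖(∑ n ∈ range N, f (n + h)) - ∑ n ∈ range N, f n‖ ≤ 2 * h := by
  rw [sum_shift]
  have e1 : (∑ n ∈ range (h + N), f n) - ∑ n ∈ range h, f n - ∑ n ∈ range N, f n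
      = (∑ n ∈ Ico N (h + N), f n) - ∑ n ∈ range h, f n := by
    rw [Finset.sum_Ico_eq_sub f (Nat.le_add_left N h)]
    ring
  rw [e1]
  calc ‖(∑ n ∈ Ico N (h + N), f n) - ∑ n ∈ range h, f n‖
      ≤ ‖∑ n ∈ Ico N (h + N), f n‖ + ‖∑ n ∈ range h, f n‖ := norm_sub_le _ _
    _ ≤ (Ico N (h + N)).card + (range h).card := by
        gcongr <;> [exact norm_sum_le_card f hf _; exact norm_sum_le_card f hf _]
    _ ≤ 2 * h := by rw [Nat.card_Ico, card_range]; simp [Nat.add_sub_cancel]; linarith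

lemma avg_norm_iff (S : ℕ → ℂ) : Tendsto (fun N : ℕ => (N:ℂ)⁻¹ * S N) atTop (nhds 0) ↔
    Tendsto (fun N : ℕ => (N:ℝ)⁻¹ * ‖S N‖) atTop (nhds 0) := by
  rw [tendsto_zero_iff_norm_tendsto_zero]
  simp only [norm_mul, norm_inv, Complex.norm_natCast]

set_option maxHeartbeats 2000000 in
lemma vdc (u : ℕ → ℂ) (hu : ∀ n, ‖u n‖ ≤ 1)
    (hcorr : ∀ k : ℕ, 1 ≤ k → Tendsto (fun N : ℕ =>
      (N:ℂ)⁻¹ * ∑ n ∈ range N, u (n + k) * (starRingEnd ℂ) (u n)) atTop (nhds 0)) :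
    Tendsto (fun N : ℕ => (N:ℂ)⁻¹ * ∑ n ∈ range N, u n) atTop (nhds 0) := by
  rw [avg_norm_iff]
  set S : ℕ → ℂ := fun N => ∑ n ∈ range N, u n with hS
  set A : ℕ → ℕ → ℂ := fun k N => ∑ n ∈ range N, u (n + k) * (starRingEnd ℂ) (u n) with hA
  have huu : ∀ k n, ‖u (n + k) * (starRingEnd ℂ) (u n)‖ ≤ 1 := by
    intro k n
    rw [norm_mul, RCLike.norm_conj]
    exact mul_le_one₀ (hu _) (norm_nonneg _) (hu _)
  set Sg : ℕ → ℕ → ℝ := fun H N => ∑ k ∈ Ico 1 H, ‖A k N‖ with hSgdef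
  have hSgnn : ∀ H N, 0 ≤ Sg H N := fun H N => Finset.sum_nonneg fun i _ => norm_nonneg _
  -- Main inequality
  have FI : ∀ H N : ℕ, 1 ≤ H →
      (H:ℝ)^2 * ‖S N‖^2 ≤ 2*H*N^2 + 2*H^2*N*(Sg H N) + 4*H^3*N + 8*H^4 := by
    intro H N hH
    set v : ℕ → ℂ := fun n => ∑ h ∈ range H, u (n + h) with hv
    set T : ℂ := ∑ n ∈ range N, v n with hT
    -- Claim 1
    have claim1 : ‖(H:ℂ) * S N - T‖ ≤ 2*H^2 := by
      have e1 : T = ∑ h ∈ range H, ∑ n ∈ range N, u (n + h) := by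
        rw [hT, hv]; exact Finset.sum_comm
      have e2 : (H:ℂ) * S N = ∑ _h ∈ range H, S N := by simp
      rw [e1, e2, ← Finset.sum_sub_distrib]
      calc ‖∑ h ∈ range H, (S N - ∑ n ∈ range N, u (n + h))‖
          ≤ ∑ h ∈ range H, ‖S N - ∑ n ∈ range N, u (n + h)‖ := norm_sum_le _ _
        _ ≤ ∑ h ∈ range H, (2*h : ℝ) := by
            refine Finset.sum_le_sum fun h _ => ?_
            rw [← norm_neg, neg_sub]
            exact shifted_sum_bound u hu h N
        _ ≤ ∑ _h ∈ range H, (2*H : ℝ) := by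
            refine Finset.sum_le_sum fun h hh => ?_
            have : (h:ℝ) ≤ H := by exact_mod_cast (Finset.mem_range.1 hh).le
            linarith
        _ = 2*H^2 := by simp; ring
    -- off-diagonal correlation bound
    have offd : ∀ h' c : ℕ, 1 ≤ c → c < H → h' < H →
        ‖∑ n ∈ range N, u (n + (h' + c)) * (starRingEnd ℂ) (u (n + h'))‖ ≤ Sg H N + 2*H := by
      intro h' c hc hcH hh'
      have e1 : ∀ n : ℕ, u (n + (h' + c)) * (starRingEnd ℂ) (u (n + h'))
          = (fun m => u (m + c) * (starRingEnd ℂ) (u m)) (n + h') := by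
        intro n; simp only; rw [show n + (h' + c) = n + h' + c by ring]
      rw [Finset.sum_congr rfl fun n _ => e1 n]
      rw [sum_shift (fun m => u (m + c) * (starRingEnd ℂ) (u m)) h' N]
      have e2 : (∑ n ∈ range (h' + N), u (n + c) * (starRingEnd ℂ) (u n)) = A c (h' + N) := rfl
      have e3 : (∑ n ∈ range h', u (n + c) * (starRingEnd ℂ) (u n)) = A c h' := rfl
      rw [e2, e3]
      have d1 : ‖A c (h' + N) - A c N‖ ≤ h' := by
        have : A c (h' + N) - A c N = ∑ n ∈ Ico N (h' + N),  u (n + c) * (starRingEnd ℂ) (u n) := by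
          rw [Finset.sum_Ico_eq_sub _ (Nat.le_add_left N h')]
        rw [this]
        have := norm_sum_le_card (fun n => u (n + c) * (starRingEnd ℂ) (u n)) (huu c) (Ico N (h' + N))
        simpa [Nat.card_Ico] using this
      have d2 : ‖A c h'‖ ≤ h' := by
        have := norm_sum_le_card (fun n => u (n + c) * (starRingEnd ℂ) (u n)) (huu c) (range h')
        simpa using this
      have d3 : ‖A c N‖ ≤ Sg H N := by
        refine Finset.single_le_sum (fun i _ => norm_nonneg (A i N)) ?_
        exact Finset.mem_Ico.2 ⟨hc, hcH⟩
      calc ‖A c (h' + N) - A c h'‖ ≤ ‖A c (h' + N) - A c N‖ + ‖A c N - A c h'‖ := by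
            have : A c (h' + N) - A c h' = (A c (h' + N) - A c N) + (A c N - A c h') := by ring
            rw [this]; exact norm_add_le _ _
        _ ≤ (h' : ℝ) + (‖A c N‖ + ‖A c h'‖) := by
            gcongr
            exact norm_sub_le _ _
        _ ≤ Sg H N + 2*H := by
            have : (h' : ℝ) ≤ H := by exact_mod_cast hh'.le
            linarith
    -- Claim 2
    have claim2 : ∑ n ∈ range N, ‖v n‖^2 ≤ H*N + H^2*(Sg H N) + 2*H^3 := by
      have e0 : ∀ z : ℂ, (z * (starRingEnd ℂ) z).re = ‖z‖^2 := by
        intro z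
        rw [Complex.mul_conj]
        simp [Complex.sq_norm]
      have e1 : ∑ n ∈ range N, ‖v n‖^2 = (∑ n ∈ range N, v n * (starRingEnd ℂ) (v n)).re := by
        rw [Complex.re_sum]
        exact (Finset.sum_congr rfl fun n _ => (e0 (v n)).symm)
      have e2 : ∑ n ∈ range N, v n * (starRingEnd ℂ) (v n)
          = ∑ h ∈ range H, ∑ h' ∈ range H, ∑ n ∈ range N, u (n + h) * (starRingEnd ℂ) (u (n + h')) := by
        have : ∀ n, v n * (starRingEnd ℂ) (v n)
            = ∑ h ∈ range H, ∑ h' ∈ range H, u (n + h) * (starRingEnd ℂ) (u (n + h')) := by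
          intro n
          calc v n * (starRingEnd ℂ) (v n)
              = (∑ h ∈ range H, u (n + h)) * (starRingEnd ℂ) (∑ h' ∈ range H, u (n + h')) := rfl
            _ = _ := by rw [map_sum, Finset.sum_mul_sum]
        rw [Finset.sum_congr rfl fun n _ => this n]
        rw [Finset.sum_comm]
        exact Finset.sum_congr rfl fun h _ => Finset.sum_comm
      have e3 : ∑ n ∈ range N, ‖v n‖^2
          ≤ ∑ h ∈ range H, ∑ h' ∈ range H, ‖∑ n ∈ range N, u (n + h) * (starRingEnd ℂ) (u (n + h'))‖ := by
        rw [e1, e2]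
        refine le_trans (Complex.re_le_norm _) ?_
        calc ‖∑ h ∈ range H, ∑ h' ∈ range H, ∑ n ∈ range N, u (n + h) * (starRingEnd ℂ) (u (n + h'))‖
            ≤ ∑ h ∈ range H, ‖∑ h' ∈ range H, ∑ n ∈ range N, u (n + h) * (starRingEnd ℂ) (u (n + h'))‖ := norm_sum_le _ _
          _ ≤ ∑ h ∈ range H, ∑ h' ∈ range H, ‖∑ n ∈ range N, u (n + h) * (starRingEnd ℂ) (u (n + h'))‖ :=
              Finset.sum_le_sum fun h _ => norm_sum_le _ _
      have e4 : ∀ h ∈ range H, ∀ h' ∈ range H,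
          ‖∑ n ∈ range N, u (n + h) * (starRingEnd ℂ) (u (n + h'))‖
          ≤ (if h = h' then (N:ℝ) else 0) + (Sg H N + 2*H) := by
        intro h hh h' hh'
        have hhH := Finset.mem_range.1 hh
        have hh'H := Finset.mem_range.1 hh'
        rcases lt_trichotomy h h' with hlt | heq | hgt
        · rw [if_neg hlt.ne]
          have key : ‖∑ n ∈ range N, u (n + h) * (starRingEnd ℂ) (u (n + h'))‖
              = ‖∑ n ∈ range N, u (n + h') * (starRingEnd ℂ) (u (n + h))‖ := by
            rw [← RCLike.norm_conj (∑ n ∈ range N, u (n + h') * (starRingEnd ℂ) (u (n + h)))]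
            rw [map_sum]
            congr 1
            refine Finset.sum_congr rfl fun n _ => ?_
            simp [map_mul, mul_comm]
          rw [key]
          have e : h' = h + (h' - h) := by omega
          rw [e]
          simpa using offd h (h' - h) (by omega) (by omega) hhH
        · rw [if_pos heq, heq]
          have : ‖∑ n ∈ range N, u (n + h') * (starRingEnd ℂ) (u (n + h'))‖ ≤ N := by
            have := norm_sum_le_card (fun n => u (n + h') * (starRingEnd ℂ) (u (n + h')))
              (fun n => by rw [norm_mul, RCLike.norm_conj]
                           exact mul_le_one₀ (hu _) (norm_nonneg _) (hu _)) (range N)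
            simpa using this
          have h2H : (0:ℝ) ≤ 2*H := by positivity
          linarith [hSgnn H N]
        · rw [if_neg hgt.ne']
          have e : h = h' + (h - h') := by omega
          rw [e]
          simpa using offd h' (h - h') (by omega) (by omega) hh'H
      have e5 : ∑ h ∈ range H, ∑ h' ∈ range H, ((if h = h' then (N:ℝ) else 0) + (Sg H N + 2*H))
          = H*N + H^2*(Sg H N + 2*H) := by
        have : ∀ h ∈ range H, ∑ h' ∈ range H, ((if h = h' then (N:ℝ) else 0) + (Sg H N + 2*H))
            = N + H * (Sg H N + 2*H) := by
          intro h hh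
          rw [Finset.sum_add_distrib, Finset.sum_ite_eq, if_pos hh]
          simp [mul_add]
        rw [Finset.sum_congr rfl this]
        simp; ring
      calc ∑ n ∈ range N, ‖v n‖^2
          ≤ ∑ h ∈ range H, ∑ h' ∈ range H, ‖∑ n ∈ range N, u (n + h) * (starRingEnd ℂ) (u (n + h'))‖ := e3
        _ ≤ ∑ h ∈ range H, ∑ h' ∈ range H, ((if h = h' then (N:ℝ) else 0) + (Sg H N + 2*H)) :=
            Finset.sum_le_sum fun h hh => Finset.sum_le_sum fun h' hh' => e4 h hh h' hh'
        _ = H*N + H^2*(Sg H N + 2*H) := e5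
        _ = H*N + H^2*(Sg H N) + 2*H^3 := by ring
    -- Cauchy-Schwarz
    have cs : ‖T‖^2 ≤ N * ∑ n ∈ range N, ‖v n‖^2 := by
      have c1 : ‖T‖ ≤ ∑ n ∈ range N, ‖v n‖ := norm_sum_le _ _
      have c2 : (∑ n ∈ range N, ‖v n‖)^2 ≤ (range N).card * ∑ n ∈ range N, ‖v n‖^2 :=
        sq_sum_le_card_mul_sum_sq
      have c3 : ‖T‖^2 ≤ (∑ n ∈ range N, ‖v n‖)^2 := by
        refine pow_le_pow_left₀ (norm_nonneg _) c1 2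
      rw [card_range] at c2
      linarith
    -- combine
    have hTnn : (0:ℝ) ≤ ‖T‖ := norm_nonneg _
    have hSnn : (0:ℝ) ≤ ‖S N‖ := norm_nonneg _
    have key : (H:ℝ) * ‖S N‖ ≤ ‖T‖ + 2*H^2 := by
      have : ‖(H:ℂ) * S N‖ - ‖T‖ ≤ 2*H^2 := le_trans (norm_sub_norm_le _ _) claim1
      rw [norm_mul, Complex.norm_natCast] at this
      linarith
    have hNnn : (0:ℝ) ≤ (N:ℝ) := Nat.cast_nonneg N
    nlinarith [sq_nonneg (‖T‖ - 2*(H:ℝ)^2), mul_le_mul_of_nonneg_left claim2 hNnn,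
      mul_self_nonneg ((H:ℝ) * ‖S N‖), sq_nonneg ((H:ℝ)*‖S N‖ - ‖T‖ - 2*(H:ℝ)^2),
      mul_le_mul key key (by positivity) (by positivity : (0:ℝ) ≤ ‖T‖ + 2*(H:ℝ)^2)]
  -- limit argument
  rw [Metric.tendsto_nhds]
  intro ε hε
  have hε2 : (0:ℝ) < ε^2 := by positivity
  set H : ℕ := ⌈(9:ℝ)/ε^2⌉₊ + 1 with hH
  have hH1 : 1 ≤ H := Nat.le_add_left 1 _
  have hHR : (9:ℝ)/ε^2 ≤ H := by
    have h1 := Nat.le_ceil ((9:ℝ)/ε^2)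
    have h2 : ((⌈(9:ℝ)/ε^2⌉₊ : ℝ)) ≤ H := by exact_mod_cast Nat.le_succ _
    linarith
  have hHpos : (0:ℝ) < H := by exact_mod_cast hH1
  have h2H' : (2:ℝ) ≤ ε^2/4 * H := by
    have h9 : (9:ℝ) ≤ ε^2 * H := by
      rw [div_le_iff₀ hε2] at hHR; linarith
    nlinarith
  have hSgt : Tendsto (fun N : ℕ => (N:ℝ)⁻¹ * Sg H N) atTop (nhds 0) := by
    have h0 : Tendsto (fun N : ℕ => ∑ k ∈ Ico 1 H, (N:ℝ)⁻¹ * ‖A k N‖) atTop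
        (nhds (∑ _k ∈ Ico 1 H, (0:ℝ))) := by
      refine tendsto_finset_sum _ fun k hk => ?_
      exact (avg_norm_iff (A k)).1 (hcorr k (Finset.mem_Ico.1 hk).1)
    simp only [Finset.sum_const_zero] at h0
    refine h0.congr fun N => ?_
    rw [Finset.mul_sum]
  have E2 : ∀ᶠ N : ℕ in atTop, (N:ℝ)⁻¹ * Sg H N < ε^2/16 :=
    hSgt.eventually (eventually_lt_nhds (show (0:ℝ) < ε^2/16 by positivity))
  have E3 : ∀ᶠ N : ℕ in atTop, (32:ℝ)*H/ε^2 ≤ N :=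
    tendsto_natCast_atTop_atTop.eventually_ge_atTop _
  have E4 : ∀ᶠ N : ℕ in atTop, (8:ℝ)*H/ε ≤ N :=
    tendsto_natCast_atTop_atTop.eventually_ge_atTop _
  have E1 : ∀ᶠ N : ℕ in atTop, (1:ℝ) ≤ N :=
    tendsto_natCast_atTop_atTop.eventually_ge_atTop _
  filter_upwards [E1, E2, E3, E4] with N h1 h2 h3 h4
  rw [Real.dist_eq, sub_zero]
  have hN0 : (0:ℝ) < N := lt_of_lt_of_le one_pos h1
  have habs : |(N:ℝ)⁻¹ * ‖S N‖| = (N:ℝ)⁻¹ * ‖S N‖ := abs_of_nonneg (by positivity)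
  rw [habs]
  have hSg : Sg H N < ε^2 * N / 16 := by
    have := (inv_mul_lt_iff₀ hN0).1 h2
    · linarith [this]
  have p1 : 2*(H:ℝ)*N^2 ≤ ε^2/4*(H^2*N^2) := by
    nlinarith [mul_le_mul_of_nonneg_right h2H' (show (0:ℝ) ≤ H*N^2 by positivity)]
  have p2 : 2*(H:ℝ)^2*N*(Sg H N) < ε^2/8*(H^2*N^2) := by
    have := mul_lt_mul_of_pos_left hSg (show (0:ℝ) < 2*(H:ℝ)^2*N by positivity)
    nlinarith [this]
  have p3 : 4*(H:ℝ)^3*N ≤ ε^2/8*(H^2*N^2) := by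
    rw [div_le_iff₀ hε2] at h3
    nlinarith [mul_le_mul_of_nonneg_left h3 (show (0:ℝ) ≤ (H:ℝ)^2*N/8 by positivity)]
  have p4 : 8*(H:ℝ)^4 ≤ ε^2/8*(H^2*N^2) := by
    rw [div_le_iff₀ hε] at h4
    have h64 : 64*(H:ℝ)^2 ≤ ε^2*N^2 := by nlinarith
    nlinarith [mul_le_mul_of_nonneg_left h64 (show (0:ℝ) ≤ (H:ℝ)^2/8 by positivity)]
  have A1 : (H:ℝ)^2 * ‖S N‖^2 < (H:ℝ)^2 * (ε^2*N^2) := by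
    have := FI H N hH1
    nlinarith [this]
  have A2 : ‖S N‖^2 < (ε*N)^2 := by
    have := lt_of_mul_lt_mul_left A1 (show (0:ℝ) ≤ (H:ℝ)^2 by positivity)
    nlinarith [this]
  have A3 : ‖S N‖ < ε*N := lt_of_pow_lt_pow_left₀ 2 (by positivity) A2
  rw [inv_mul_eq_div, div_lt_iff₀ hN0]
  linarith [A3]

lemma avg_tendsto_zero_of_bounded {S : ℕ → ℂ} (C : ℝ) (h : ∀ N, ‖S N‖ ≤ C) :
    Tendsto (fun N : ℕ => (N:ℂ)⁻¹ * S N) atTop (nhds 0) := by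
  rw [avg_norm_iff]
  have hb : ∀ N : ℕ, ‖(N:ℝ)⁻¹ * ‖S N‖‖ ≤ C * (N:ℝ)⁻¹ := by
    intro N
    rw [Real.norm_eq_abs, _root_.abs_of_nonneg (by positivity)]
    rcases Nat.eq_zero_or_pos N with h0 | h0
    · simp [h0]
    · have hN : (0:ℝ) ≤ (N:ℝ)⁻¹ := by positivity
      calc (N:ℝ)⁻¹ * ‖S N‖ ≤ (N:ℝ)⁻¹ * C := by gcongr; exact h N
        _ = C * (N:ℝ)⁻¹ := mul_comm _ _
  refine squeeze_zero_norm hb ?_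
  have h2 : Tendsto (fun N : ℕ => ((N:ℝ))⁻¹) atTop (nhds 0) :=
    tendsto_inv_atTop_zero.comp tendsto_natCast_atTop_atTop
  simpa using h2.const_mul C

lemma ee_ne_one {a : ℝ} (ha : Irrational a) : ee a ≠ 1 := by
  intro hcontr
  rw [ee, Complex.exp_eq_one_iff] at hcontr
  obtain ⟨n, hn⟩ := hcontr
  have h2 : (2 * (Real.pi:ℂ) * Complex.I) ≠ 0 := by
    simp [Real.pi_ne_zero, Complex.I_ne_zero]
  have hn' : 2 * (Real.pi:ℂ) * Complex.I * (a:ℝ) = 2 * (Real.pi:ℂ) * Complex.I * (n:ℂ) := by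
    rw [hn]; ring
  have hcast : ((a:ℝ):ℂ) = ((n:ℤ):ℂ) := mul_left_cancel₀ h2 hn'
  have : a = (n:ℤ) := by exact_mod_cast hcast
  exact ha.ne_int n this

lemma weyl_base (a b : ℝ) (ha : Irrational a) :
    Tendsto (fun N : ℕ => (N:ℂ)⁻¹ * ∑ n ∈ range N, ee (a * n + b)) atTop (nhds 0) := by
  have hne := ee_ne_one ha
  have hd : 0 < ‖ee a - 1‖ := by
    rw [norm_pos_iff]
    exact sub_ne_zero.2 hne
  apply avg_tendsto_zero_of_bounded (2 / ‖ee a - 1‖)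
  intro N
  have e1 : ∑ n ∈ range N, ee (a * n + b) = ee b * ∑ n ∈ range N, (ee a)^n := by
    rw [Finset.mul_sum]
    refine Finset.sum_congr rfl fun n _ => ?_
    rw [ee_add, ee_nat_mul, mul_comm]
  rw [e1, geom_sum_eq hne, norm_mul, norm_ee, one_mul, norm_div]
  gcongr
  calc ‖ee a ^ N - 1‖ ≤ ‖ee a ^ N‖ + ‖(1:ℂ)‖ := norm_sub_le _ _
    _ = 2 := by rw [norm_pow, norm_ee]; norm_num

lemma hasse_high (P : Polynomial ℝ) (k : ℕ) (h : P.natDegree ≤ k) :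
    Polynomial.hasseDeriv k P = Polynomial.C (P.coeff k) := by
  ext j
  rw [Polynomial.hasseDeriv_coeff, Polynomial.coeff_C]
  rcases Nat.eq_zero_or_pos j with h0 | h0
  · subst h0; simp
  · rw [if_neg h0.ne']
    have : P.natDegree < j + k := by omega
    rw [Polynomial.coeff_eq_zero_of_natDegree_lt this, mul_zero]

lemma diff_poly_deg (P : Polynomial ℝ) (m : ℕ) (hdeg : P.natDegree ≤ m + 1) (c : ℝ) :
    ((Polynomial.taylor c P) - P).natDegree ≤ m := by
  rw [Polynomial.natDegree_le_iff_coeff_eq_zero]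
  intro k hk
  rw [Polynomial.coeff_sub, Polynomial.taylor_coeff, hasse_high P k (le_trans hdeg hk),
    Polynomial.eval_C, sub_self]

lemma diff_poly_coeff (P : Polynomial ℝ) (m : ℕ) (hdeg : P.natDegree ≤ m + 1) (c : ℝ) :
    ((Polynomial.taylor c P) - P).coeff m = (m+1 : ℝ) * c * P.coeff (m+1) := by
  rw [Polynomial.coeff_sub, Polynomial.taylor_coeff]
  have hdeg2 : (Polynomial.hasseDeriv m P).natDegree < 2 := by
    have := Polynomial.natDegree_hasseDeriv_le P m
    omega
  rw [Polynomial.eval_eq_sum_range' hdeg2]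
  rw [Finset.sum_range_succ, Finset.sum_range_one]
  rw [Polynomial.hasseDeriv_coeff, Polynomial.hasseDeriv_coeff]
  have hc : (1+m).choose m = m+1 := by rw [Nat.add_comm]; exact Nat.choose_succ_self_right m
  have hc' : (0+m).choose m = 1 := by simp
  rw [hc, hc']
  push_cast
  rw [Nat.add_comm 1 m]
  push_cast
  ring

lemma weyl_lead : ∀ D : ℕ, ∀ P : Polynomial ℝ, 1 ≤ D → P.natDegree ≤ D → Irrational (P.coeff D) →
    Tendsto (fun N : ℕ => (N:ℂ)⁻¹ * ∑ n ∈ range N, ee (P.eval (n:ℝ))) atTop (nhds 0) := by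
  intro D
  induction D with
  | zero => intro P h; omega
  | succ m ih =>
    intro P _ hdeg hirr
    rcases Nat.eq_zero_or_pos m with hm | hm
    · subst hm
      have he : ∀ n : ℕ, P.eval (n:ℝ) = P.coeff 1 * n + P.coeff 0 := by
        intro n
        rw [Polynomial.eval_eq_sum_range' (show P.natDegree < 2 by omega)]
        rw [Finset.sum_range_succ, Finset.sum_range_one]
        ring
      have := weyl_base (P.coeff 1) (P.coeff 0) hirr
      refine this.congr fun N => ?_
      congr 1
      exact Finset.sum_congr rfl fun n _ => by rw [he n]
    · apply vdc (fun n => ee (P.eval (n:ℝ))) (fun n => le_of_eq (norm_ee _))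
      intro k hk
      set Q : Polynomial ℝ := (Polynomial.taylor (k:ℝ) P) - P with hQ
      have hQdeg : Q.natDegree ≤ m := diff_poly_deg P m hdeg (k:ℝ)
      have hQcoeff : Q.coeff m = ((m+1)*k : ℕ) * P.coeff (m+1) := by
        rw [hQ, diff_poly_coeff P m hdeg (k:ℝ)]
        push_cast; ring
      have hQirr : Irrational (Q.coeff m) := by
        rw [hQcoeff]
        refine hirr.natCast_mul ?_
        have : 1 ≤ k := hk
        positivity
      have key : ∀ n : ℕ, ee (P.eval ((n + k : ℕ):ℝ)) * (starRingEnd ℂ) (ee (P.eval (n:ℝ)))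
          = ee (Q.eval (n:ℝ)) := by
        intro n
        rw [conj_ee, ← ee_add]
        congr 1
        rw [hQ, Polynomial.eval_sub, Polynomial.taylor_eval]
        push_cast
        ring
      refine (ih Q hm hQdeg hQirr).congr fun N => ?_
      congr 1
      exact Finset.sum_congr rfl fun n _ => (key n).symm

lemma ee_congr {x y : ℝ} (h : x = y) : ee x = ee y := by rw [h]

lemma sum_residue_split (g : ℕ → ℂ) (q M : ℕ) :
    ∑ n ∈ range (q*M), g n = ∑ r ∈ range q, ∑ m ∈ range M, g (q*m+r) := by
  induction M with
  | zero => simp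
  | succ m ih =>
    rw [Nat.mul_succ, Finset.sum_range_add, ih]
    rw [Finset.sum_congr rfl (fun r _ => Finset.sum_range_succ (fun mm => g (q*mm+r)) m)]
    rw [Finset.sum_add_distrib]

set_option maxHeartbeats 1000000 in
lemma weyl_rat_split (d : ℕ) (hd : 2 ≤ d) (p : ℤ) (q : ℕ) (hq : 1 ≤ q) (β : ℝ)
    (hβ : Irrational β) :
    Tendsto (fun N : ℕ => (N:ℂ)⁻¹ * ∑ n ∈ range N,
      ee ((n:ℝ)^d * ((p:ℝ)/(q:ℝ)) + (n:ℝ)^(d-1) * β)) atTop (nhds 0) := by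
  have hq0 : (q:ℝ) ≠ 0 := by positivity
  set g : ℕ → ℂ := fun n => ee ((n:ℝ)^d * ((p:ℝ)/(q:ℝ)) + (n:ℝ)^(d-1) * β) with hg
  have hgnorm : ∀ n, ‖g n‖ ≤ 1 := fun n => le_of_eq (norm_ee _)
  -- the progression polynomial
  have prog : ∀ r : ℕ, r < q → Tendsto (fun M : ℕ =>
      (M:ℂ)⁻¹ * ∑ m ∈ range M, g (q*m+r)) atTop (nhds 0) := by
    intro r hr
    set P : Polynomial ℝ := Polynomial.C β * (Polynomial.C (q:ℝ) * Polynomial.X + Polynomial.C (r:ℝ))^(d-1) with hP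
    have hlin : (Polynomial.C (q:ℝ) * Polynomial.X + Polynomial.C (r:ℝ)).natDegree = 1 :=
      Polynomial.natDegree_linear hq0
    have hPdeg : P.natDegree ≤ d - 1 := by
      refine le_trans (Polynomial.natDegree_mul_le) ?_
      rw [Polynomial.natDegree_C, Polynomial.natDegree_pow, hlin]
      omega
    have hPcoeff : P.coeff (d-1) = β * (q:ℝ)^(d-1) := by
      rw [hP, Polynomial.coeff_C_mul]
      congr 1
      have h1 : ((Polynomial.C (q:ℝ) * Polynomial.X + Polynomial.C (r:ℝ))^(d-1)).natDegree = d - 1 := by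
        rw [Polynomial.natDegree_pow, hlin, mul_one]
      have h2 := Polynomial.leadingCoeff_pow (Polynomial.C (q:ℝ) * Polynomial.X + Polynomial.C (r:ℝ)) (d-1)
      rw [Polynomial.leadingCoeff_linear hq0, Polynomial.leadingCoeff, h1] at h2
      exact h2
    have hPirr : Irrational (P.coeff (d-1)) := by
      rw [hPcoeff]
      have : ((q:ℝ))^(d-1) = ((q^(d-1) : ℕ) : ℝ) := by push_cast; ring
      rw [this]
      exact hβ.mul_natCast (by positivity)
    have hW := weyl_lead (d-1) P (by omega) hPdeg hPirr
    -- g (q*m+r) = ee (r^d * (p/q)) * ee (P.eval m)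
    have hsplit : ∀ m : ℕ, g (q*m+r) = ee ((r:ℝ)^d * ((p:ℝ)/(q:ℝ))) * ee (P.eval (m:ℝ)) := by
      intro m
      have hdvd : ((q:ℤ)) ∣ ((q:ℤ)*m+r)^d - (r:ℤ)^d := by
        have h1 : ((q:ℤ)*m+r) ≡ (r:ℤ) [ZMOD (q:ℤ)] :=
          Int.modEq_iff_dvd.2 ⟨-(m:ℤ), by ring⟩
        have h2 := (h1.pow d).dvd
        have h3 := dvd_neg.2 h2
        rwa [neg_sub] at h3
      obtain ⟨s, hs⟩ := hdvd
      have hs' : ((q:ℤ)*m+r)^d = (r:ℤ)^d + q*s := by linarith [hs]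
      have hcastR : ((q:ℝ)*(m:ℝ)+(r:ℝ))^d = (r:ℝ)^d + (q:ℝ)*(s:ℝ) := by exact_mod_cast hs'
      have hPe : P.eval (m:ℝ) = β * ((q:ℝ)*(m:ℝ)+(r:ℝ))^(d-1) := by simp [hP]
      have harg : ((q*m+r : ℕ):ℝ)^d * ((p:ℝ)/(q:ℝ)) + ((q*m+r : ℕ):ℝ)^(d-1) * β
          = ((r:ℝ)^d * ((p:ℝ)/(q:ℝ)) + ((s*p : ℤ):ℝ)) + P.eval (m:ℝ) := by
        rw [hPe]
        push_cast
        rw [hcastR]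
        field_simp
      calc g (q*m+r) = ee (((r:ℝ)^d * ((p:ℝ)/(q:ℝ)) + ((s*p : ℤ):ℝ)) + P.eval (m:ℝ)) :=
            ee_congr harg
        _ = (ee ((r:ℝ)^d * ((p:ℝ)/(q:ℝ))) * ee (((s*p : ℤ):ℝ))) * ee (P.eval (m:ℝ)) := by
            rw [ee_add, ee_add]
        _ = ee ((r:ℝ)^d * ((p:ℝ)/(q:ℝ))) * ee (P.eval (m:ℝ)) := by rw [ee_int, mul_one]
    have := hW.const_mul (ee ((r:ℝ)^d * ((p:ℝ)/(q:ℝ))))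
    rw [mul_zero] at this
    refine this.congr fun M => ?_
    rw [Finset.sum_congr rfl fun m _ => hsplit m, ← Finset.mul_sum]
    ring
  -- combine the residue classes
  rw [avg_norm_iff]
  have hq0' : 0 < q := hq
  have hdivtop : Tendsto (fun N : ℕ => N / q) atTop atTop :=
    le_of_eq (map_div_atTop_eq_nat q hq0')
  have hBlim : Tendsto (fun N : ℕ =>
      (∑ r ∈ range q, (q:ℝ)⁻¹ * ((((N/q : ℕ):ℝ))⁻¹ * ‖∑ m ∈ range (N/q), g (q*m+r)‖))
      + (q:ℝ) * (N:ℝ)⁻¹) atTop (nhds 0) := by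
    have h1 : Tendsto (fun N : ℕ =>
        ∑ r ∈ range q, (q:ℝ)⁻¹ * ((((N/q : ℕ):ℝ))⁻¹ * ‖∑ m ∈ range (N/q), g (q*m+r)‖))
        atTop (nhds (∑ _r ∈ range q, (0:ℝ))) := by
      refine tendsto_finset_sum _ fun r hr => ?_
      have h2 := ((avg_norm_iff _).1 (prog r (Finset.mem_range.1 hr))).comp hdivtop
      simpa using h2.const_mul ((q:ℝ)⁻¹)
    simp only [Finset.sum_const_zero] at h1
    have h3 : Tendsto (fun N : ℕ => (q:ℝ) * (N:ℝ)⁻¹) atTop (nhds 0) := by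
      have := (tendsto_inv_atTop_zero.comp tendsto_natCast_atTop_atTop).const_mul (q:ℝ)
      simpa using this
    simpa using h1.add h3
  refine squeeze_zero' ?_ ?_ hBlim
  · exact Eventually.of_forall fun N => by positivity
  · filter_upwards [eventually_ge_atTop q] with N hN
    set M := N / q with hM
    have hM1 : 1 ≤ M := (Nat.one_le_div_iff hq0').2 hN
    have hqM : q * M ≤ N := by
      rw [hM, mul_comm]
      exact Nat.div_mul_le_self N q
    have hsplit2 : ∑ n ∈ range (q*M), g n = ∑ r ∈ range q, ∑ m ∈ range M, g (q*m+r) :=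
      sum_residue_split g q M
    have hn1 : 1 ≤ N := le_trans hq hN
    have hNR : (0:ℝ) < (N:ℝ) := by exact_mod_cast Nat.lt_of_lt_of_le Nat.zero_lt_one hn1
    have hqM1 : 1 ≤ q * M := Nat.mul_pos hq0' hM1
    have hqMR : (0:ℝ) < (q:ℝ) * (M:ℝ) := by
      have : (0:ℝ) < ((q*M : ℕ):ℝ) := by exact_mod_cast hqM1
      push_cast at this
      linarith
    have hdm : q * M + N % q = N := by rw [hM]; exact Nat.div_add_mod N q
    have hmodlt : N % q < q := Nat.mod_lt _ hq0'
    have e1 : ∑ n ∈ range N, g n = (∑ n ∈ range (q*M), g n) + ∑ i ∈ range (N - q*M), g (q*M + i) := by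
      have eN : q*M + (N - q*M) = N := Nat.add_sub_cancel' hqM
      rw [← Finset.sum_range_add, eN]
    have hd1 : ‖∑ n ∈ range N, g n‖ ≤ (∑ r ∈ range q, ‖∑ m ∈ range M, g (q*m+r)‖) + q := by
      rw [e1]
      refine le_trans (norm_add_le _ _) ?_
      refine add_le_add ?_ ?_
      · rw [hsplit2]
        exact norm_sum_le _ _
      · have h5 := norm_sum_le_card (fun i => g (q*M+i)) (fun i => hgnorm _) (range (N - q*M))
        rw [card_range] at h5
        refine le_trans h5 ?_
        have h6 : N - q*M < q := by omega
        exact_mod_cast h6.le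
    calc (N:ℝ)⁻¹ * ‖∑ n ∈ range N, g n‖
        ≤ (N:ℝ)⁻¹ * ((∑ r ∈ range q, ‖∑ m ∈ range M, g (q*m+r)‖) + q) := by
          gcongr
      _ = (∑ r ∈ range q, (N:ℝ)⁻¹ * ‖∑ m ∈ range M, g (q*m+r)‖) + (q:ℝ) * (N:ℝ)⁻¹ := by
          rw [mul_add, Finset.mul_sum]
          ring
      _ ≤ (∑ r ∈ range q, (q:ℝ)⁻¹ * (((M:ℕ):ℝ)⁻¹ * ‖∑ m ∈ range M, g (q*m+r)‖)) + (q:ℝ) * (N:ℝ)⁻¹ := by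
          refine add_le_add_left ?_ _
          refine Finset.sum_le_sum fun r hr => ?_
          rw [← mul_assoc, ← mul_inv]
          refine mul_le_mul_of_nonneg_right ?_ (norm_nonneg _)
          refine inv_anti₀ hqMR ?_
          calc (q:ℝ) * (M:ℝ) = ((q*M : ℕ):ℝ) := by push_cast; ring
            _ ≤ (N:ℝ) := by exact_mod_cast hqM


end WeylMachinery

theorem weakly_oscillating_not_oscillating (d : ℕ) (hd : 2 ≤ d)
    (α β : ℝ) (hα : Irrational α) (hβ : Irrational β) :
    WeaklyOscillatingOfOrder
        (fun n => Complex.exp (2 * Real.pi * Complex.I *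
          ((n : ℝ) ^ d * α + (n : ℝ) ^ (d - 1) * β))) d ∧
      ¬ OscillatingOfOrder
        (fun n => Complex.exp (2 * Real.pi * Complex.I *
          ((n : ℝ) ^ d * α + (n : ℝ) ^ (d - 1) * β))) d := by
  constructor
  · intro k hk t ht0 ht1
    have hfun : ∀ n : ℕ, Complex.exp (2 * Real.pi * Complex.I *
          ((n : ℝ) ^ d * α + (n : ℝ) ^ (d - 1) * β))
        * Complex.exp (2 * Real.pi * Complex.I * ((n : ℝ) ^ k * t))
        = ee ((n:ℝ)^d*α + (n:ℝ)^(d-1)*β + (n:ℝ)^k*t) := by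
      intro n
      rw [show (n:ℝ)^d*α + (n:ℝ)^(d-1)*β + (n:ℝ)^k*t
          = ((n:ℝ)^d*α + (n:ℝ)^(d-1)*β) + (n:ℝ)^k*t from by ring, ee_add]
      congr 1
      · rw [ee]; congr 1; push_cast; ring
      · rw [ee]; congr 1; push_cast; ring
    rcases lt_or_eq_of_le hk with hkd | hkd
    · -- k < d
      set P : Polynomial ℝ := Polynomial.C α * Polynomial.X^d + Polynomial.C β * Polynomial.X^(d-1)
        + Polynomial.C t * Polynomial.X^k with hP
      have hdeg : P.natDegree ≤ d := by
        refine le_trans (Polynomial.natDegree_add_le _ _) (max_le ?_ ?_)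
        · refine le_trans (Polynomial.natDegree_add_le _ _) (max_le ?_ ?_)
          · exact Polynomial.natDegree_C_mul_X_pow_le α d
          · exact le_trans (Polynomial.natDegree_C_mul_X_pow_le β (d-1)) (by omega)
        · exact le_trans (Polynomial.natDegree_C_mul_X_pow_le t k) (by omega)
      have h1 : ¬(d = d - 1) := by omega
      have h2 : ¬(d = k) := by omega
      have hcoeff : P.coeff d = α := by
        simp [hP, Polynomial.coeff_X_pow, h1, h2]
      have heval : ∀ n : ℕ, P.eval (n:ℝ) = (n:ℝ)^d*α + (n:ℝ)^(d-1)*β + (n:ℝ)^k*t := by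
        intro n
        simp [hP]
        ring
      have hW := weyl_lead d P (by omega) hdeg (by rw [hcoeff]; exact hα)
      refine hW.congr fun N => ?_
      congr 1
      refine Finset.sum_congr rfl fun n _ => ?_
      exact (ee_congr (heval n)).trans (hfun n).symm
    · -- k = d
      subst hkd
      by_cases hγ : Irrational (α + t)
      · set P : Polynomial ℝ := Polynomial.C (α + t) * Polynomial.X^k + Polynomial.C β * Polynomial.X^(k-1) with hP
        have hdeg : P.natDegree ≤ k := by
          refine le_trans (Polynomial.natDegree_add_le _ _) (max_le ?_ ?_)
          · exact Polynomial.natDegree_C_mul_X_pow_le _ k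
          · exact le_trans (Polynomial.natDegree_C_mul_X_pow_le β (k-1)) (by omega)
        have h1 : ¬(k = k - 1) := by omega
        have hcoeff : P.coeff k = α + t := by
          simp [hP, Polynomial.coeff_X_pow, h1]
          rw [add_mul, Polynomial.coeff_add]
          simp [Polynomial.coeff_X_pow]
        have heval : ∀ n : ℕ, P.eval (n:ℝ) = (n:ℝ)^k*α + (n:ℝ)^(k-1)*β + (n:ℝ)^k*t := by
          intro n
          simp [hP]
          ring
        have hW := weyl_lead k P (by omega) hdeg (by rw [hcoeff]; exact hγ)
        refine hW.congr fun N => ?_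
        congr 1
        refine Finset.sum_congr rfl fun n _ => ?_
        exact (ee_congr (heval n)).trans (hfun n).symm
      · have hmem : (α + t) ∈ Set.range ((↑) : ℚ → ℝ) := not_not.1 hγ
        obtain ⟨s, hs⟩ := hmem
        have hden : 1 ≤ s.den := s.pos
        have hW := weyl_rat_split k hd s.num s.den hden β hβ
        have hcast : ((s.num:ℝ))/(s.den:ℝ) = α + t := by
          rw [← hs, Rat.cast_def]
        refine hW.congr fun N => ?_
        congr 1
        refine Finset.sum_congr rfl fun n _ => ?_
        refine (ee_congr ?_).trans (hfun n).symm
        rw [hcast]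
        ring
  · intro hosc
    set P : Polynomial ℝ := Polynomial.C (-α) * Polynomial.X^d + Polynomial.C (-β) * Polynomial.X^(d-1) with hP
    have hdeg : P.natDegree ≤ d := by
      refine le_trans (Polynomial.natDegree_add_le _ _) (max_le ?_ ?_)
      · exact Polynomial.natDegree_C_mul_X_pow_le _ d
      · exact le_trans (Polynomial.natDegree_C_mul_X_pow_le _ (d-1)) (by omega)
    have hlim := hosc P hdeg
    have hone : ∀ n : ℕ, Complex.exp (2 * Real.pi * Complex.I *
          ((n : ℝ) ^ d * α + (n : ℝ) ^ (d - 1) * β))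
        * Complex.exp (2 * Real.pi * Complex.I * (P.eval (n:ℝ))) = 1 := by
      intro n
      have e1 : Complex.exp (2 * Real.pi * Complex.I *
          ((n : ℝ) ^ d * α + (n : ℝ) ^ (d - 1) * β))
          * Complex.exp (2 * Real.pi * Complex.I * (P.eval (n:ℝ)))
          = ee (((n : ℝ) ^ d * α + (n : ℝ) ^ (d - 1) * β) + P.eval (n:ℝ)) := by
        rw [ee_add]
        congr 1
        rw [ee]; congr 1; push_cast; ring
      rw [e1]
      have e2 : ((n : ℝ) ^ d * α + (n : ℝ) ^ (d - 1) * β) + P.eval (n:ℝ) = ((0:ℤ):ℝ) := by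
        simp [hP]
        ring
      rw [ee_congr e2, ee_int]
    have hlim2 : Tendsto (fun N : ℕ => (N:ℂ)⁻¹ * N) atTop (nhds 0) := by
      refine hlim.congr fun N => ?_
      congr 1
      rw [Finset.sum_congr rfl fun n _ => hone n]
      simp
    have hev : (fun N : ℕ => (N:ℂ)⁻¹ * N) =ᶠ[atTop] (fun _ => (1:ℂ)) := by
      filter_upwards [eventually_ge_atTop 1] with N hN
      have : (N:ℂ) ≠ 0 := by
        exact Nat.cast_ne_zero.2 (by omega)
      rw [inv_mul_cancel₀ this]
    have : (0:ℂ) = 1 := tendsto_nhds_unique (hlim2.congr' hev) tendsto_const_nhds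
    exact zero_ne_one this
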